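/- Let x₁ ≥ x₂ ≥ ... ≥ x_m be a citation vector with partial sums S_k, extended by S_k = S_m for k > m. If S_m ≥ (m+1)², then the g-index satisfies g = m, and the unconstrained index satisfies g* = ⌊√S_m⌋ ≥ m + 1. -/
import Mathlib


open Finset

/-- Partial sum `S_k = x₁ + ⋯ + x_k` of a citation vector, with the natural
extension `S_k = S_m` for `k > m`. -/
def pSum {m : ℕ} (x : Fin m → ℕ) (k : ℕ) : ℕ :=
  ∑ i : Fin m, if (i : ℕ) < k then x i else 0

/-- `m*(j)`: the number of papers with at least `j` citations. -/
def mStar {m : ℕ} (x : Fin m → ℕ) (j : ℕ) : ℕ :=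
  (Finset.univ.filter fun i => j ≤ x i).card

/-- The Hirsch `h`-index: `h = max {j ≥ 1 : m*(j) ≥ j}` (max ∅ = 0). -/
noncomputable def hIndex {m : ℕ} (x : Fin m → ℕ) : ℕ :=
  sSup {j : ℕ | 1 ≤ j ∧ j ≤ mStar x j}

/-- The Egghe `g`-index: `g = max {1 ≤ k ≤ m : S_k ≥ k²}` (max ∅ = 0). -/
noncomputable def gIndex {m : ℕ} (x : Fin m → ℕ) : ℕ :=
  sSup {k : ℕ | 1 ≤ k ∧ k ≤ m ∧ k ^ 2 ≤ pSum x k}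

/-- The unconstrained `g*`-index: `g* = max {k ≥ 1 : S_k ≥ k²}` (max ∅ = 0). -/
noncomputable def gStar {m : ℕ} (x : Fin m → ℕ) : ℕ :=
  sSup {k : ℕ | 1 ≤ k ∧ k ^ 2 ≤ pSum x k}

/-- The `ν`-index: `ν = max {j ≥ 1 : Σ_{i : x_i ≥ j} x_i ≥ j²}` (max ∅ = 0). -/
noncomputable def nuIndex {m : ℕ} (x : Fin m → ℕ) : ℕ :=
  sSup {j : ℕ | 1 ≤ j ∧ j ^ 2 ≤ ∑ i ∈ Finset.univ.filter (fun i => j ≤ x i), x i}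

/-- The tempered `ν̄`-index: `ν̄ = max {1 ≤ j ≤ m : Σ_{i : x_i ≥ j} x_i ≥ j²}` (max ∅ = 0). -/
noncomputable def nuBar {m : ℕ} (x : Fin m → ℕ) : ℕ :=
  sSup {j : ℕ | 1 ≤ j ∧ j ≤ m ∧ j ^ 2 ≤ ∑ i ∈ Finset.univ.filter (fun i => j ≤ x i), x i}

/-- The parametric index `ν_α = max {j ≥ 1 : Σ_{i : x_i ≥ j} x_i^α ≥ j^(α+1)}` (max ∅ = 0),
with real powers. -/
noncomputable def nuAlpha {m : ℕ} (x : Fin m → ℕ) (α : ℝ) : ℕ :=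
  sSup {j : ℕ | 1 ≤ j ∧
    (j : ℝ) ^ (α + 1) ≤ ∑ i ∈ Finset.univ.filter (fun i => j ≤ x i), (x i : ℝ) ^ α}

/-- Extension of a finite citation vector by fictitious zeros. -/
def extByZero {m : ℕ} (x : Fin m → ℕ) (i : ℕ) : ℕ :=
  if h : i < m then x ⟨i, h⟩ else 0

theorem stmt3 {m : ℕ} (hm : 1 ≤ m) (x : Fin m → ℕ) (hx : Antitone x)
    (hS : (m + 1) ^ 2 ≤ pSum x m) :
    gIndex x = m ∧ gStar x = Nat.sqrt (pSum x m) ∧ m + 1 ≤ gStar x := by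
  have hle : ∀ k, pSum x k ≤ pSum x m := by
    intro k
    unfold pSum
    apply Finset.sum_le_sum
    intro i _
    split <;> simp [i.isLt]
  have heq : ∀ k, m ≤ k → pSum x k = pSum x m := by
    intro k hk
    unfold pSum
    apply Finset.sum_congr rfl
    intro i _
    simp [i.isLt, lt_of_lt_of_le i.isLt hk]
  set S := pSum x m with hSdef
  have hmm : m ^ 2 ≤ pSum x m := le_trans (by nlinarith) hS
  have hsq : m + 1 ≤ Nat.sqrt S := Nat.le_sqrt.mpr (by simpa [pow_two] using hS)
  have hg : gIndex x = m := by
    unfold gIndex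
    have hmem : m ∈ {k : ℕ | 1 ≤ k ∧ k ≤ m ∧ k ^ 2 ≤ pSum x k} := ⟨hm, le_refl m, hmm⟩
    apply le_antisymm
    · exact csSup_le ⟨m, hmem⟩ (fun k hk => hk.2.1)
    · exact le_csSup ⟨m, fun k hk => hk.2.1⟩ hmem
  have hgs : gStar x = Nat.sqrt S := by
    unfold gStar
    have hub : ∀ k ∈ {k : ℕ | 1 ≤ k ∧ k ^ 2 ≤ pSum x k}, k ≤ Nat.sqrt S := by
      rintro k ⟨_, hk⟩
      exact Nat.le_sqrt.mpr (le_trans (by simpa [pow_two] using hk) (hle k))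
    have hmem : Nat.sqrt S ∈ {k : ℕ | 1 ≤ k ∧ k ^ 2 ≤ pSum x k} := by
      refine ⟨le_trans (by omega) hsq, ?_⟩
      rw [heq _ (le_trans (by omega) hsq)]
      simpa [pow_two] using Nat.sqrt_le S
    apply le_antisymm
    · exact csSup_le ⟨_, hmem⟩ hub
    · exact le_csSup ⟨Nat.sqrt S, hub⟩ hmem
  exact ⟨hg, hgs, hgs ▸ hsq⟩
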